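/- Let α ∈ ℝ and β ∈ ℤ. The entrywise map A = (a_st) ↦ (Ψ_{α,β}(a_st)) sends every 3×3 Hermitian positive semidefinite complex matrix to a positive semidefinite matrix, if and only if for every t = (t_1,t_2,t_3) ∈ [0,1]³ and every θ ∈ (−3π,3π) satisfying 1 − t_1² − t_2² − t_3² + 2 t_1 t_2 t_3 cos θ ≥ 0, the matrix T((f_α(t_1), f_α(t_2), f_α(t_3)), βθ) is positive semidefinite. -/

import Mathlib

open scoped Classical ComplexOrder

/-- The `mn × mn` block matrix whose `(s,t)` block is the `m × m` matrix `H s t`. -/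
def blockM {m n : ℕ} (H : Fin n → Fin n → Matrix (Fin m) (Fin m) ℂ) :
    Matrix (Fin n × Fin m) (Fin n × Fin m) ℂ :=
  Matrix.of fun p q => H p.1 q.1 p.2 q.2

/-- `f_α(x) := x^α` for `x ≠ 0`, with the convention `f_α(0) := 0`. -/
noncomputable def fPow (α : ℝ) (x : ℝ) : ℝ := if x = 0 then 0 else x ^ α

/-- `φ_α(x) := |x|^α` for `x ≠ 0`, with `φ_α(0) := 0`. -/
noncomputable def phiPow (α : ℝ) (x : ℝ) : ℝ := if x = 0 then 0 else |x| ^ α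

/-- `ψ_α(x) := sgn(x)|x|^α` for `x ≠ 0`, with `ψ_α(0) := 0`. -/
noncomputable def psiPow (α : ℝ) (x : ℝ) : ℝ := if x = 0 then 0 else Real.sign x * |x| ^ α

/-- Apply a function `f : ℝ → ℂ` to a Hermitian matrix via its spectral decomposition
(junk value `0` on non-Hermitian input). -/
noncomputable def hermFun {m : ℕ} (f : ℝ → ℂ) (B : Matrix (Fin m) (Fin m) ℂ) :
    Matrix (Fin m) (Fin m) ℂ :=
  if hB : B.IsHermitian then
    (hB.eigenvectorUnitary : Matrix (Fin m) (Fin m) ℂ) *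
      Matrix.diagonal (fun i => f (hB.eigenvalues i)) *
      (star (hB.eigenvectorUnitary : Matrix (Fin m) (Fin m) ℂ))
  else 0

/-- `B^α` for a Hermitian matrix `B`, computed via the spectral decomposition of `B`,
with the convention `0^α := 0` on the spectrum. -/
noncomputable def hermPow {m : ℕ} (α : ℝ) (B : Matrix (Fin m) (Fin m) ℂ) :
    Matrix (Fin m) (Fin m) ℂ :=
  hermFun (fun x => ((fPow α x : ℝ) : ℂ)) B

/-- The power function `Ψ_{α,β}` on `ℂ`: `Ψ_{α,β}(r e^{iθ}) := r^α e^{iβθ}` for `r > 0`,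
`θ ∈ (-π, π]`, and `Ψ_{α,β}(0) := 0`. -/
noncomputable def Psi (α β : ℝ) (z : ℂ) : ℂ :=
  if z = 0 then 0
  else ((‖z‖ ^ α : ℝ) : ℂ) * Complex.exp (((β * z.arg : ℝ) : ℂ) * Complex.I)

/-- The 3×3 Hermitian matrix `T(t, θ)` with unit diagonal and off-diagonal entries
`T₁₂ = t₃`, `T₁₃ = t₂ e^{iθ}`, `T₂₃ = t₁`. -/
noncomputable def T3 (t1 t2 t3 θ : ℝ) : Matrix (Fin 3) (Fin 3) ℂ :=
  !![1, (t3 : ℂ), (t2 : ℂ) * Complex.exp ((θ : ℂ) * Complex.I);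
     (t3 : ℂ), 1, (t1 : ℂ);
     (t2 : ℂ) * Complex.exp (-(θ : ℂ) * Complex.I), (t1 : ℂ), 1]

/-! ### Auxiliary lemmas -/

open Complex Matrix

lemma exp_zpow (x : ℝ) (β : ℤ) :
    Complex.exp ((x:ℂ) * Complex.I) ^ β = Complex.exp (((β * x : ℝ):ℂ) * Complex.I) := by
  rw [← Complex.exp_int_mul]; push_cast; ring_nf

lemma conj_exp_rmI (x : ℝ) :
    (starRingEnd ℂ) (Complex.exp ((x:ℂ) * Complex.I)) = Complex.exp (((-x : ℝ):ℂ) * Complex.I) := by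
  rw [← Complex.exp_conj]; push_cast; rw [_root_.map_mul, Complex.conj_ofReal, Complex.conj_I]; ring_nf

lemma fPow_nonneg {α x : ℝ} (hx : 0 ≤ x) : 0 ≤ fPow α x := by
  unfold fPow; split
  · exact le_refl 0
  · exact Real.rpow_nonneg hx α

lemma psi_apply (α : ℝ) (β : ℤ) (t φ : ℝ) (ht : 0 ≤ t) :
    Psi α (β:ℝ) ((t:ℂ) * Complex.exp ((φ:ℂ) * Complex.I)) =
      ((fPow α t : ℝ):ℂ) * Complex.exp (((β * φ : ℝ):ℂ) * Complex.I) := by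
  rcases eq_or_lt_of_le ht with h0 | hpos
  · simp [← h0, Psi, fPow]
  · have hz : (t:ℂ) * Complex.exp ((φ:ℂ) * Complex.I) ≠ 0 := by
      apply mul_ne_zero
      · exact_mod_cast hpos.ne'
      · exact Complex.exp_ne_zero _
    set z : ℂ := (t:ℂ) * Complex.exp ((φ:ℂ) * Complex.I) with hzdef
    have habs : ‖z‖ = t := by
      rw [hzdef, norm_mul, Complex.norm_exp_ofReal_mul_I, Complex.norm_real, Real.norm_eq_abs, abs_of_pos hpos,
        mul_one]
    have hexp : Complex.exp ((Complex.arg z : ℂ) * Complex.I)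
        = Complex.exp ((φ:ℂ) * Complex.I) := by
      have h := Complex.norm_mul_exp_arg_mul_I z
      rw [habs] at h
      have ht' : (t:ℂ) ≠ 0 := by exact_mod_cast hpos.ne'
      rw [hzdef] at h
      exact mul_left_cancel₀ ht' h
    rw [Psi, if_neg hz, habs]
    have : Complex.exp (((β * Complex.arg z : ℝ):ℂ) * Complex.I)
        = Complex.exp (((β * φ : ℝ):ℂ) * Complex.I) := by
      rw [← exp_zpow, ← exp_zpow, hexp]
    rw [show (((β:ℝ) * Complex.arg z : ℝ):ℂ) = (((β * Complex.arg z : ℝ)):ℂ) by push_cast; ring]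
    rw [this, fPow, if_neg hpos.ne']

lemma psi_real (α : ℝ) (β : ℤ) (t : ℝ) (ht : 0 ≤ t) :
    Psi α (β:ℝ) (t:ℂ) = ((fPow α t : ℝ):ℂ) := by
  have := psi_apply α β t 0 ht
  simpa using this

lemma fPow_one (α : ℝ) : fPow α 1 = 1 := by simp [fPow]

lemma cubic_nonneg {a b c : ℝ} (h1 : 0 ≤ a + b + c) (h2 : 0 ≤ a*b + b*c + a*c)
    (h3 : 0 ≤ a*b*c) : 0 ≤ a := by
  by_contra h
  push_neg at h
  nlinarith [sq_nonneg a, sq_nonneg (b+c), mul_pos (neg_pos.2 h) (neg_pos.2 h)]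

lemma trace_eq (M : Matrix (Fin 3) (Fin 3) ℂ) (hM : M.IsHermitian) :
    M.trace = ((∑ i, hM.eigenvalues i : ℝ) : ℂ) := by
  conv_lhs => rw [hM.spectral_theorem, Unitary.conjStarAlgAut_apply]
  rw [Matrix.trace_mul_cycle, mul_assoc, ← Matrix.mul_assoc,
    (Matrix.mem_unitaryGroup_iff').mp (hM.eigenvectorUnitary).2, one_mul]
  simp [Matrix.trace_diagonal]

lemma trace_sq_eq (M : Matrix (Fin 3) (Fin 3) ℂ) (hM : M.IsHermitian) :
    (M * M).trace = ((∑ i, (hM.eigenvalues i)^2 : ℝ) : ℂ) := by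
  conv_lhs => rw [hM.spectral_theorem, Unitary.conjStarAlgAut_apply]
  rw [show ∀ U D : Matrix (Fin 3) (Fin 3) ℂ, (U * D * star U) * (U * D * star U)
      = U * (D * (star U * U) * D) * star U by intros; noncomm_ring]
  rw [(Matrix.mem_unitaryGroup_iff').mp (hM.eigenvectorUnitary).2, mul_one]
  rw [Matrix.trace_mul_cycle, ← mul_assoc,
    (Matrix.mem_unitaryGroup_iff').mp (hM.eigenvectorUnitary).2, one_mul,
    Matrix.diagonal_mul_diagonal]
  simp [Matrix.trace_diagonal, pow_two]

lemma posSemidef3 {M : Matrix (Fin 3) (Fin 3) ℂ} (hM : M.IsHermitian)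
    (h1 : 0 ≤ M.trace.re) (h2 : (M * M).trace.re ≤ M.trace.re ^ 2)
    (h3 : 0 ≤ M.det.re) : M.PosSemidef := by
  set a := hM.eigenvalues 0
  set b := hM.eigenvalues 1
  set c := hM.eigenvalues 2
  have htr : M.trace.re = a + b + c := by
    rw [trace_eq M hM, Complex.ofReal_re, Fin.sum_univ_three]
  have htr2 : (M * M).trace.re = a^2 + b^2 + c^2 := by
    rw [trace_sq_eq M hM, Complex.ofReal_re, Fin.sum_univ_three]
  have hdet : M.det.re = a * b * c := by
    rw [hM.det_eq_prod_eigenvalues]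
    push_cast
    simp [Fin.prod_univ_three]
    rfl
  rw [htr] at h1
  rw [htr2, htr] at h2
  rw [hdet] at h3
  have h2' : 0 ≤ a*b + b*c + a*c := by nlinarith
  apply hM.posSemidef_iff_eigenvalues_nonneg.mpr
  intro i
  have key : ∀ x y z : ℝ, 0 ≤ x + y + z → 0 ≤ x*y + y*z + x*z → 0 ≤ x*y*z → 0 ≤ x :=
    fun x y z hx hy hz => cubic_nonneg hx hy hz
  fin_cases i
  · exact key a b c h1 h2' h3
  · exact key b a c (by linarith) (by nlinarith) (by nlinarith)
  · exact key c a b (by linarith) (by nlinarith) (by nlinarith)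

lemma psd_diag_nonneg {n : ℕ} {A : Matrix (Fin n) (Fin n) ℂ} (hA : A.PosSemidef) (i : Fin n) :
    0 ≤ A i i := by
  exact hA.diag_nonneg

lemma psd_det_nonneg {n : ℕ} {A : Matrix (Fin n) (Fin n) ℂ} (hA : A.PosSemidef) :
    0 ≤ A.det := by
  rw [hA.isHermitian.det_eq_prod_eigenvalues]
  exact Finset.prod_nonneg fun i _ => Complex.zero_le_real.2 (hA.eigenvalues_nonneg i)

lemma diag_eq {A : Matrix (Fin 3) (Fin 3) ℂ} (hA : A.PosSemidef) (i : Fin 3) :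
    A i i = ((A i i).re : ℂ) := by
  have h := psd_diag_nonneg hA i
  rw [Complex.nonneg_iff] at h
  exact Complex.ext rfl (by simp [h.2.symm])

lemma offdiag_sq_le {A : Matrix (Fin 3) (Fin 3) ℂ} (hA : A.PosSemidef) (i j : Fin 3) :
    ‖A i j‖ ^ 2 ≤ (A i i).re * (A j j).re := by
  have hdet : 0 ≤ (A.submatrix ![i,j] ![i,j]).det := psd_det_nonneg (hA.submatrix ![i,j])
  rw [Matrix.det_fin_two] at hdet
  simp only [Matrix.submatrix_apply, Matrix.cons_val_zero, Matrix.cons_val_one,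
    Matrix.head_cons] at hdet
  rw [Complex.nonneg_iff] at hdet
  have hji : A j i = (starRingEnd ℂ) (A i j) := (hA.isHermitian.apply j i).symm
  have h1 := hdet.1
  rw [hji, diag_eq hA i, diag_eq hA j, Complex.sub_re, Complex.mul_conj] at h1
  simp only [Complex.mul_re, Complex.ofReal_re, Complex.ofReal_im, mul_zero, sub_zero,
    Complex.normSq_eq_norm_sq, Complex.ofReal_re] at h1
  linarith

lemma exp_neg_eq (θ : ℝ) : Complex.exp (-(θ:ℂ) * Complex.I)
    = ((Real.cos θ : ℝ):ℂ) - ((Real.sin θ : ℝ):ℂ) * Complex.I := by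
  rw [show -(θ:ℂ) * Complex.I = (-θ:ℂ) * Complex.I by ring, Complex.exp_mul_I]
  push_cast
  rw [Complex.cos_neg, Complex.sin_neg]
  ring

lemma exp_pos_eq (θ : ℝ) : Complex.exp ((θ:ℂ) * Complex.I)
    = ((Real.cos θ : ℝ):ℂ) + ((Real.sin θ : ℝ):ℂ) * Complex.I := by
  rw [Complex.exp_mul_I]; push_cast; ring

lemma exp_neg_eq' (θ : ℝ) : Complex.exp (-((θ:ℂ) * Complex.I))
    = ((Real.cos θ : ℝ):ℂ) - ((Real.sin θ : ℝ):ℂ) * Complex.I := by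
  rw [← exp_neg_eq]; ring_nf

lemma T3_herm (t1 t2 t3 θ : ℝ) : (T3 t1 t2 t3 θ).IsHermitian := by
  unfold Matrix.IsHermitian
  ext i j
  fin_cases i <;> fin_cases j <;>
    simp [T3, Matrix.conjTranspose_apply, exp_pos_eq, exp_neg_eq, exp_neg_eq',
      Complex.ext_iff, Complex.cos_ofReal_re, Complex.sin_ofReal_re]

lemma T3_trace (t1 t2 t3 θ : ℝ) : (T3 t1 t2 t3 θ).trace = 3 := by
  simp [T3, Matrix.trace, Matrix.diag, Fin.sum_univ_three]
  norm_num

lemma T3_trace_sq (t1 t2 t3 θ : ℝ) :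
    ((T3 t1 t2 t3 θ) * (T3 t1 t2 t3 θ)).trace.re = 3 + 2*(t1^2 + t2^2 + t3^2) := by
  simp [T3, Matrix.trace, Matrix.diag, Fin.sum_univ_three, Matrix.mul_apply,
    exp_pos_eq, exp_neg_eq, exp_neg_eq', Complex.mul_re, Complex.mul_im,
    Complex.cos_ofReal_re, Complex.sin_ofReal_re]
  nlinarith [Real.sin_sq_add_cos_sq θ]

lemma T3_det (t1 t2 t3 θ : ℝ) :
    (T3 t1 t2 t3 θ).det.re = 1 - t1^2 - t2^2 - t3^2 + 2*t1*t2*t3*Real.cos θ := by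
  rw [Matrix.det_fin_three]
  simp [T3, exp_pos_eq, exp_neg_eq, exp_neg_eq', Complex.mul_re, Complex.mul_im,
    Complex.cos_ofReal_re, Complex.sin_ofReal_re]
  nlinarith [Real.sin_sq_add_cos_sq θ]

lemma map_T3 (α : ℝ) (β : ℤ) (t1 t2 t3 θ : ℝ) (h1 : 0 ≤ t1) (h2 : 0 ≤ t2) (h3 : 0 ≤ t3) :
    (T3 t1 t2 t3 θ).map (Psi α (β:ℝ))
      = T3 (fPow α t1) (fPow α t2) (fPow α t3) ((β:ℝ) * θ) := by
  ext i j
  fin_cases i <;> fin_cases j <;>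
    simp only [Matrix.map_apply, T3, Matrix.of_apply, Matrix.cons_val', Matrix.cons_val_zero,
      Matrix.cons_val_one, Matrix.head_cons, Matrix.empty_val', Matrix.cons_val_fin_one,
      Matrix.head_fin_const, Fin.zero_eta, Fin.mk_one, Fin.reduceFinMk, Matrix.cons_val_two,
      Matrix.tail_cons]
  · rw [show (1:ℂ) = ((1:ℝ):ℂ) by norm_num, psi_real α β 1 zero_le_one, fPow_one]
  · rw [psi_real α β t3 h3]
  · rw [psi_apply α β t2 θ h2]
  · rw [psi_real α β t3 h3]
  · rw [show (1:ℂ) = ((1:ℝ):ℂ) by norm_num, psi_real α β 1 zero_le_one, fPow_one]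
  · rw [psi_real α β t1 h1]
  · rw [show -(θ:ℂ) * Complex.I = ((-θ:ℝ):ℂ) * Complex.I by push_cast; ring,
      psi_apply α β t2 (-θ) h2]
    congr 2
    push_cast
    ring
  · rw [psi_real α β t1 h1]
  · rw [show (1:ℂ) = ((1:ℝ):ℂ) by norm_num, psi_real α β 1 zero_le_one, fPow_one]

lemma fPow_half_sq {α x : ℝ} (hx : 0 ≤ x) : fPow (α/2) x * fPow (α/2) x = fPow α x := by
  unfold fPow
  rcases eq_or_lt_of_le hx with h0 | hpos
  · simp [← h0]
  · rw [if_neg hpos.ne', if_neg hpos.ne', ← Real.rpow_add hpos]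
    norm_num

lemma mod_helper (α : ℝ) {r da db : ℝ} (hr : 0 ≤ r) (hda : 0 ≤ da) (hdb : 0 ≤ db)
    (hle : r^2 ≤ da*db) :
    fPow (α/2) da * fPow α (r / Real.sqrt (da*db)) * fPow (α/2) db = fPow α r := by
  rcases eq_or_lt_of_le hr with h0 | hrpos
  · rw [← h0]
    simp [fPow]
  · have hprod : 0 < da * db := lt_of_lt_of_le (by positivity) hle
    have hda' : 0 < da := by
      rcases lt_or_ge 0 da with h | h
      · exact h
      · nlinarith
    have hdb' : 0 < db := by
      rcases lt_or_ge 0 db with h | h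
      · exact h
      · nlinarith
    have hs : 0 < Real.sqrt (da*db) := Real.sqrt_pos.2 hprod
    have hq : 0 < r / Real.sqrt (da*db) := div_pos hrpos hs
    unfold fPow
    rw [if_neg hda'.ne', if_neg hdb'.ne', if_neg hq.ne', if_neg hrpos.ne']
    have h1 : da ^ (α/2) * db ^ (α/2) = (da*db)^(α/2) := (Real.mul_rpow hda'.le hdb'.le).symm
    have h2 : (da*db)^(α/2) = Real.sqrt (da*db) ^ α := by
      rw [Real.rpow_def_of_pos hprod, Real.rpow_def_of_pos hs,
        Real.log_sqrt hprod.le]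
      ring_nf
    have h3 : Real.sqrt (da*db) ^ α * (r / Real.sqrt (da*db)) ^ α = r ^ α := by
      rw [← Real.mul_rpow hs.le hq.le, mul_div_cancel₀ _ hs.ne']
    calc da ^ (α/2) * (r / Real.sqrt (da*db)) ^ α * db ^ (α/2)
        = (da ^ (α/2) * db ^ (α/2)) * (r / Real.sqrt (da*db)) ^ α := by ring
      _ = Real.sqrt (da*db) ^ α * (r / Real.sqrt (da*db)) ^ α := by rw [h1, h2]
      _ = r ^ α := h3

lemma exp_arg_conj (z : ℂ) :
    Complex.exp (((Complex.arg ((starRingEnd ℂ) z) : ℝ):ℂ) * Complex.I)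
      = Complex.exp (((-Complex.arg z : ℝ):ℂ) * Complex.I) := by
  rcases eq_or_ne z 0 with rfl | hz
  · simp
  · have h1 := Complex.norm_mul_exp_arg_mul_I ((starRingEnd ℂ) z)
    have h2 := Complex.norm_mul_exp_arg_mul_I z
    have habs : ‖(starRingEnd ℂ) z‖ = ‖z‖ := Complex.norm_conj z
    rw [habs] at h1
    have hz' : (‖z‖ : ℂ) ≠ 0 := by
      simpa using norm_ne_zero_iff.mpr hz
    apply mul_left_cancel₀ hz'
    rw [h1, ← conj_exp_rmI,
      show ((‖z‖ : ℝ):ℂ) *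
          (starRingEnd ℂ) (Complex.exp (((Complex.arg z : ℝ):ℂ) * Complex.I))
        = (starRingEnd ℂ) (((‖z‖ : ℝ):ℂ) *
            Complex.exp (((Complex.arg z : ℝ):ℂ) * Complex.I)) by
          rw [_root_.map_mul, Complex.conj_ofReal],
      h2]

lemma entry_helper (α : ℝ) (β : ℤ) (z : ℂ) (da db φa φb ψ : ℝ)
    (hda : 0 ≤ da) (hdb : 0 ≤ db) (hle : (‖z‖)^2 ≤ da*db)
    (hph : Complex.exp (((Complex.arg z : ℝ):ℂ) * Complex.I)
      = Complex.exp (((φa + ψ - φb : ℝ):ℂ) * Complex.I)) :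
    Psi α (β:ℝ) z =
      (((fPow (α/2) da : ℝ):ℂ) * Complex.exp ((((β:ℝ)*φa : ℝ):ℂ) * Complex.I)) *
      (((fPow α (‖z‖ / Real.sqrt (da*db)) : ℝ):ℂ) *
        Complex.exp ((((β:ℝ)*ψ : ℝ):ℂ) * Complex.I)) *
      (starRingEnd ℂ) (((fPow (α/2) db : ℝ):ℂ) *
        Complex.exp ((((β:ℝ)*φb : ℝ):ℂ) * Complex.I)) := by
  rcases eq_or_ne z 0 with rfl | hz
  · simp [Psi, fPow]
  · conv_lhs => rw [← Complex.norm_mul_exp_arg_mul_I z]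
    rw [psi_apply α β (‖z‖) (Complex.arg z) (norm_nonneg z)]
    rw [_root_.map_mul, Complex.conj_ofReal, conj_exp_rmI]
    rw [show (((fPow (α/2) da : ℝ):ℂ) * Complex.exp ((((β:ℝ)*φa : ℝ):ℂ) * Complex.I)) *
      (((fPow α (‖z‖ / Real.sqrt (da*db)) : ℝ):ℂ) *
        Complex.exp ((((β:ℝ)*ψ : ℝ):ℂ) * Complex.I)) *
      (((fPow (α/2) db : ℝ):ℂ) * Complex.exp (((-((β:ℝ)*φb) : ℝ):ℂ) * Complex.I))
      = (((fPow (α/2) da * fPow α (‖z‖ / Real.sqrt (da*db)) * fPow (α/2) db : ℝ):ℂ)) *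
        (Complex.exp ((((β:ℝ)*φa : ℝ):ℂ) * Complex.I) *
         Complex.exp ((((β:ℝ)*ψ : ℝ):ℂ) * Complex.I) *
         Complex.exp (((-((β:ℝ)*φb) : ℝ):ℂ) * Complex.I)) by push_cast; ring]
    rw [mod_helper α (norm_nonneg z) hda hdb hle]
    congr 1
    rw [← Complex.exp_add, ← Complex.exp_add]
    rw [show ((((β:ℝ)*φa : ℝ):ℂ) * Complex.I + (((β:ℝ)*ψ : ℝ):ℂ) * Complex.I +
        (((-((β:ℝ)*φb) : ℝ):ℂ) * Complex.I))
        = (((β * (φa + ψ - φb) : ℝ):ℂ) * Complex.I) by push_cast; ring]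
    rw [← exp_zpow, ← exp_zpow, hph]

lemma diag_entry (α : ℝ) (β : ℤ) (d x : ℝ) (hd : 0 ≤ d) :
    Psi α (β:ℝ) ((d : ℝ):ℂ) =
      (((fPow (α/2) d : ℝ):ℂ) * Complex.exp (((x:ℝ):ℂ) * Complex.I)) * 1 *
      (starRingEnd ℂ) (((fPow (α/2) d : ℝ):ℂ) * Complex.exp (((x:ℝ):ℂ) * Complex.I)) := by
  rw [psi_real α β d hd, _root_.map_mul, Complex.conj_ofReal, conj_exp_rmI, mul_one]
  rw [show (((fPow (α/2) d : ℝ):ℂ) * Complex.exp (((x:ℝ):ℂ) * Complex.I)) *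
      (((fPow (α/2) d : ℝ):ℂ) * Complex.exp (((-x:ℝ):ℂ) * Complex.I))
      = ((fPow (α/2) d * fPow (α/2) d : ℝ):ℂ) *
        (Complex.exp (((x:ℝ):ℂ) * Complex.I) * Complex.exp (((-x:ℝ):ℂ) * Complex.I)) by
        push_cast; ring]
  rw [← Complex.exp_add, show ((x:ℝ):ℂ) * Complex.I + ((-x:ℝ):ℂ) * Complex.I = 0 by
    push_cast; ring]
  rw [Complex.exp_zero, mul_one, fPow_half_sq hd]

lemma re_triple (z1 z3 z2 : ℂ) :
    (z1 * z3 * (starRingEnd ℂ) z2).re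
      = ‖z1‖ * ‖z3‖ * ‖z2‖ *
        Real.cos (Complex.arg z1 + Complex.arg z3 - Complex.arg z2) := by
  conv_lhs => rw [← Complex.norm_mul_exp_arg_mul_I z1, ← Complex.norm_mul_exp_arg_mul_I z3,
    ← Complex.norm_mul_exp_arg_mul_I z2]
  rw [_root_.map_mul, Complex.conj_ofReal, conj_exp_rmI]
  rw [show ((‖z1‖ : ℝ):ℂ) * Complex.exp (((Complex.arg z1 : ℝ):ℂ) * Complex.I) *
      (((‖z3‖ : ℝ):ℂ) * Complex.exp (((Complex.arg z3 : ℝ):ℂ) * Complex.I)) *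
      (((‖z2‖ : ℝ):ℂ) * Complex.exp (((-Complex.arg z2 : ℝ):ℂ) * Complex.I))
      = ((‖z1‖ * ‖z3‖ * ‖z2‖ : ℝ):ℂ) *
        (Complex.exp (((Complex.arg z1 : ℝ):ℂ) * Complex.I) *
         Complex.exp (((Complex.arg z3 : ℝ):ℂ) * Complex.I) *
         Complex.exp (((-Complex.arg z2 : ℝ):ℂ) * Complex.I)) by push_cast; ring]
  rw [← Complex.exp_add, ← Complex.exp_add,
    show (((Complex.arg z1 : ℝ):ℂ) * Complex.I + ((Complex.arg z3 : ℝ):ℂ) * Complex.I +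
      ((-Complex.arg z2 : ℝ):ℂ) * Complex.I)
      = ((Complex.arg z1 + Complex.arg z3 - Complex.arg z2 : ℝ):ℂ) * Complex.I by
        push_cast; ring]
  rw [Complex.re_ofReal_mul, Complex.exp_ofReal_mul_I_re]

lemma det3_re {A : Matrix (Fin 3) (Fin 3) ℂ} (hH : A.IsHermitian) :
    A.det.re = (A 0 0).re * (A 1 1).re * (A 2 2).re
      - (A 0 0).re * ‖A 1 2‖ ^ 2
      - (A 1 1).re * ‖A 0 2‖ ^ 2
      - (A 2 2).re * ‖A 0 1‖ ^ 2
      + 2 * (A 0 1 * A 1 2 * (starRingEnd ℂ) (A 0 2)).re := by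
  have h10 : A 1 0 = (starRingEnd ℂ) (A 0 1) := (hH.apply 1 0).symm
  have h20 : A 2 0 = (starRingEnd ℂ) (A 0 2) := (hH.apply 2 0).symm
  have h21 : A 2 1 = (starRingEnd ℂ) (A 1 2) := (hH.apply 2 1).symm
  have him : ∀ i : Fin 3, (A i i).im = 0 := by
    intro i
    have h2 := hH.apply i i
    rw [Complex.ext_iff] at h2
    have := h2.2
    simp only [Complex.conj_im, RCLike.star_def] at this
    linarith [this]
  have h00 := him 0
  have h11 := him 1
  have h22 := him 2
  rw [Matrix.det_fin_three, h10, h20, h21]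
  simp only [Complex.add_re, Complex.sub_re, Complex.mul_re, Complex.mul_im,
    Complex.conj_re, Complex.conj_im, Complex.sq_norm, Complex.normSq_apply, h00, h11, h22]
  ring

lemma ratio_mem {r da db : ℝ} (hr : 0 ≤ r) (hda : 0 ≤ da) (hdb : 0 ≤ db)
    (hle : r^2 ≤ da*db) : r / Real.sqrt (da*db) ∈ Set.Icc (0:ℝ) 1 := by
  constructor
  · positivity
  · apply div_le_one_of_le₀
    · calc r = Real.sqrt (r^2) := (Real.sqrt_sq hr).symm
        _ ≤ Real.sqrt (da*db) := Real.sqrt_le_sqrt hle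
    · positivity

set_option maxHeartbeats 2000000 in
open Real in
/-- Corollary: `Ψ_{α,β}` preserves positivity entrywise on 3×3 Hermitian positive
semidefinite matrices iff it does so on the matrices `T(t,θ)`. -/
theorem Psi_preserves_iff_T3 (α : ℝ) (β : ℤ) :
    (∀ A : Matrix (Fin 3) (Fin 3) ℂ, A.PosSemidef →
      (A.map (Psi α (β : ℝ))).PosSemidef) ↔
    (∀ t1 t2 t3 θ : ℝ, t1 ∈ Set.Icc (0 : ℝ) 1 → t2 ∈ Set.Icc (0 : ℝ) 1 →
      t3 ∈ Set.Icc (0 : ℝ) 1 → θ ∈ Set.Ioo (-(3 * π)) (3 * π) →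
      0 ≤ 1 - t1 ^ 2 - t2 ^ 2 - t3 ^ 2 + 2 * t1 * t2 * t3 * Real.cos θ →
      (T3 (fPow α t1) (fPow α t2) (fPow α t3) ((β : ℝ) * θ)).PosSemidef) := by
  constructor
  · intro h t1 t2 t3 θ ht1 ht2 ht3 hθ hdet
    have hA : (T3 t1 t2 t3 θ).PosSemidef := by
      apply posSemidef3 (T3_herm t1 t2 t3 θ)
      · rw [T3_trace]; norm_num
      · rw [T3_trace_sq, T3_trace]
        norm_num
        nlinarith [ht1.1, ht1.2, ht2.1, ht2.2, ht3.1, ht3.2]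
      · rw [T3_det]; linarith
    have := h _ hA
    rwa [map_T3 α β t1 t2 t3 θ ht1.1 ht2.1 ht3.1] at this
  · intro h A hA
    have hH := hA.isHermitian
    have hd : ∀ i, 0 ≤ (A i i).re := fun i => ((Complex.nonneg_iff).1 (psd_diag_nonneg hA i)).1
    set d0 := (A 0 0).re with hd0
    set d1 := (A 1 1).re with hd1
    set d2 := (A 2 2).re with hd2
    set z1 := A 0 1 with hz1
    set z2 := A 0 2 with hz2
    set z3 := A 1 2 with hz3
    set a1 := Complex.arg z1 with ha1
    set a3 := Complex.arg z3 with ha3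
    set a2 := Complex.arg z2 with ha2
    set t1' := ‖z3‖ / Real.sqrt (d1 * d2) with ht1'
    set t2' := ‖z2‖ / Real.sqrt (d0 * d2) with ht2'
    set t3' := ‖z1‖ / Real.sqrt (d0 * d1) with ht3'
    set θ' := a2 - a1 - a3 with hθ'
    have hle1 : ‖z3‖ ^ 2 ≤ d1 * d2 := offdiag_sq_le hA 1 2
    have hle2 : ‖z2‖ ^ 2 ≤ d0 * d2 := offdiag_sq_le hA 0 2
    have hle3 : ‖z1‖ ^ 2 ≤ d0 * d1 := offdiag_sq_le hA 0 1
    have hm1 : t1' ∈ Set.Icc (0:ℝ) 1 :=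
      ratio_mem (norm_nonneg _) (hd 1) (hd 2) hle1
    have hm2 : t2' ∈ Set.Icc (0:ℝ) 1 :=
      ratio_mem (norm_nonneg _) (hd 0) (hd 2) hle2
    have hm3 : t3' ∈ Set.Icc (0:ℝ) 1 :=
      ratio_mem (norm_nonneg _) (hd 0) (hd 1) hle3
    have hmθ : θ' ∈ Set.Ioo (-(3 * π)) (3 * π) := by
      have b1 := Complex.arg_le_pi z1
      have b2 := Complex.arg_le_pi z2
      have b3 := Complex.arg_le_pi z3
      have c1 := Complex.neg_pi_lt_arg z1
      have c2 := Complex.neg_pi_lt_arg z2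
      have c3 := Complex.neg_pi_lt_arg z3
      constructor <;> [skip; skip] <;> rw [hθ'] <;> simp only [ha1, ha2, ha3] <;> linarith
    have hdetre : 0 ≤ A.det.re := ((Complex.nonneg_iff).1 (psd_det_nonneg hA)).1
    have hcond : 0 ≤ 1 - t1' ^ 2 - t2' ^ 2 - t3' ^ 2 + 2 * t1' * t2' * t3' * Real.cos θ' := by
      by_cases hz : d0 = 0 ∨ d1 = 0 ∨ d2 = 0
      · have key : t1' = 0 ∨ t2' = 0 ∨ t3' = 0 → True := fun _ => trivial
        rcases hz with h0 | h0 | h0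
        · have e2 : t2' = 0 := by
            rw [ht2']
            have : ‖z2‖ = 0 := by nlinarith [norm_nonneg z2, hd 2]
            rw [this]; simp
          have e3 : t3' = 0 := by
            rw [ht3']
            have : ‖z1‖ = 0 := by nlinarith [norm_nonneg z1, hd 1]
            rw [this]; simp
          rw [e2, e3]
          nlinarith [hm1.1, hm1.2]
        · have e1 : t1' = 0 := by
            rw [ht1']
            have : ‖z3‖ = 0 := by nlinarith [norm_nonneg z3, hd 2]
            rw [this]; simp
          have e3 : t3' = 0 := by
            rw [ht3']
            have : ‖z1‖ = 0 := by nlinarith [norm_nonneg z1, hd 0]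
            rw [this]; simp
          rw [e1, e3]
          nlinarith [hm2.1, hm2.2]
        · have e1 : t1' = 0 := by
            rw [ht1']
            have : ‖z3‖ = 0 := by nlinarith [norm_nonneg z3, hd 1]
            rw [this]; simp
          have e2 : t2' = 0 := by
            rw [ht2']
            have : ‖z2‖ = 0 := by nlinarith [norm_nonneg z2, hd 0]
            rw [this]; simp
          rw [e1, e2]
          nlinarith [hm3.1, hm3.2]
      · push_neg at hz
        have hp0 : 0 < d0 := lt_of_le_of_ne (hd 0) (Ne.symm hz.1)
        have hp1 : 0 < d1 := lt_of_le_of_ne (hd 1) (Ne.symm hz.2.1)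
        have hp2 : 0 < d2 := lt_of_le_of_ne (hd 2) (Ne.symm hz.2.2)
        have s1pos : (0:ℝ) < Real.sqrt (d1 * d2) := Real.sqrt_pos.2 (by positivity)
        have s2pos : (0:ℝ) < Real.sqrt (d0 * d2) := Real.sqrt_pos.2 (by positivity)
        have s3pos : (0:ℝ) < Real.sqrt (d0 * d1) := Real.sqrt_pos.2 (by positivity)
        have sq1 : Real.sqrt (d1 * d2) ^ 2 = d1 * d2 := Real.sq_sqrt (by positivity)
        have sq2 : Real.sqrt (d0 * d2) ^ 2 = d0 * d2 := Real.sq_sqrt (by positivity)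
        have sq3 : Real.sqrt (d0 * d1) ^ 2 = d0 * d1 := Real.sq_sqrt (by positivity)
        have sprod : Real.sqrt (d1 * d2) * Real.sqrt (d0 * d2) * Real.sqrt (d0 * d1)
            = d0 * d1 * d2 := by
          rw [← Real.sqrt_mul (by positivity), ← Real.sqrt_mul (by positivity)]
          rw [show d1 * d2 * (d0 * d2) * (d0 * d1) = (d0 * d1 * d2)^2 by ring]
          exact Real.sqrt_sq (by positivity)
        have htripre : (z1 * z3 * (starRingEnd ℂ) z2).re
            = ‖z1‖ * ‖z3‖ * ‖z2‖ * Real.cos θ' := by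
          rw [re_triple z1 z3 z2]
          congr 1
          rw [show Complex.arg z1 + Complex.arg z3 - Complex.arg z2 = -θ' by
            rw [hθ']; ring]
          exact Real.cos_neg θ'
        have hkey : d0 * d1 * d2 *
            (1 - t1' ^ 2 - t2' ^ 2 - t3' ^ 2 + 2 * t1' * t2' * t3' * Real.cos θ')
            = A.det.re := by
          have e1 : t1' ^ 2 = ‖z3‖ ^ 2 / (d1 * d2) := by rw [ht1', div_pow, sq1]
          have e2 : t2' ^ 2 = ‖z2‖ ^ 2 / (d0 * d2) := by rw [ht2', div_pow, sq2]
          have e3 : t3' ^ 2 = ‖z1‖ ^ 2 / (d0 * d1) := by rw [ht3', div_pow, sq3]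
          have htp : t1' * t2' * t3'
              = ‖z3‖ * ‖z2‖ * ‖z1‖ / (d0 * d1 * d2) := by
            rw [ht1', ht2', ht3', div_mul_div_comm, div_mul_div_comm, sprod]
          rw [det3_re hH, htripre,
            show 2 * t1' * t2' * t3' * Real.cos θ' = 2 * (t1' * t2' * t3') * Real.cos θ' by ring,
            htp, e1, e2, e3]
          field_simp
          ring
        have hpos : (0:ℝ) < d0 * d1 * d2 := by positivity
        have := hkey ▸ hdetre
        exact nonneg_of_mul_nonneg_right this hpos
    have hT := h t1' t2' t3' θ' hm1 hm2 hm3 hmθ hcond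
    -- the diagonal congruence
    set c0 : ℂ := ((fPow (α/2) d0 : ℝ):ℂ) *
      Complex.exp ((((β:ℝ) * (0:ℝ) : ℝ):ℂ) * Complex.I) with hc0
    set c1 : ℂ := ((fPow (α/2) d1 : ℝ):ℂ) *
      Complex.exp ((((β:ℝ) * (-a1) : ℝ):ℂ) * Complex.I) with hc1
    set c2 : ℂ := ((fPow (α/2) d2 : ℝ):ℂ) *
      Complex.exp ((((β:ℝ) * (-(a1+a3)) : ℝ):ℂ) * Complex.I) with hc2
    have hmap : A.map (Psi α (β:ℝ)) =
        Matrix.diagonal ![c0, c1, c2] *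
          T3 (fPow α t1') (fPow α t2') (fPow α t3') ((β:ℝ) * θ') *
          (Matrix.diagonal ![c0, c1, c2])ᴴ := by
      rw [Matrix.diagonal_conjTranspose]
      ext i j
      rw [Matrix.map_apply, Matrix.mul_diagonal, Matrix.diagonal_mul, Pi.star_apply]
      fin_cases i <;> fin_cases j <;>
        simp only [T3, Matrix.of_apply, Matrix.cons_val', Matrix.cons_val_zero,
          Matrix.cons_val_one, Matrix.head_cons, Matrix.empty_val', Matrix.cons_val_fin_one,
          Matrix.head_fin_const, Fin.zero_eta, Fin.mk_one, Fin.reduceFinMk, Matrix.cons_val_two,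
          Matrix.tail_cons, Complex.star_def]
      · -- (0,0)
        rw [diag_eq hA 0, ← hd0, diag_entry α β d0 ((β:ℝ) * (0:ℝ)) (hd 0), hc0]
      · -- (0,1)
        rw [show A 0 1 = z1 from rfl,
          entry_helper α β z1 d0 d1 0 (-a1) 0 (hd 0) (hd 1) hle3 (by norm_num; rfl),
          hc0, hc1, ht3']
        norm_num
      · -- (0,2)
        rw [show A 0 2 = z2 from rfl,
          entry_helper α β z2 d0 d2 0 (-(a1+a3)) θ' (hd 0) (hd 2) hle2 (by
            rw [show (0 + θ' - (-(a1+a3)) : ℝ) = a2 by rw [hθ']; ring]),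
          hc0, hc2, ht2']
      · -- (1,0)
        rw [show A 1 0 = (starRingEnd ℂ) z1 from (hH.apply 1 0).symm,
          entry_helper α β ((starRingEnd ℂ) z1) d1 d0 (-a1) 0 0 (hd 1) (hd 0)
            (by rw [Complex.norm_conj, mul_comm]; exact hle3)
            (by rw [exp_arg_conj, show (-a1 + 0 - 0 : ℝ) = -a1 by ring]),
          hc0, hc1]
        rw [show ‖(starRingEnd ℂ) z1‖ / Real.sqrt (d1 * d0) = t3' by
          rw [Complex.norm_conj, mul_comm d1 d0, ht3']]
        norm_num
      · -- (1,1)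
        rw [diag_eq hA 1, ← hd1, diag_entry α β d1 ((β:ℝ) * (-a1)) (hd 1), hc1]
      · -- (1,2)
        rw [show A 1 2 = z3 from rfl,
          entry_helper α β z3 d1 d2 (-a1) (-(a1+a3)) 0 (hd 1) (hd 2) hle1
            (by rw [show (-a1 + 0 - (-(a1+a3)) : ℝ) = a3 by ring]),
          hc1, hc2, ht1']
        norm_num
      · -- (2,0)
        rw [show A 2 0 = (starRingEnd ℂ) z2 from (hH.apply 2 0).symm,
          entry_helper α β ((starRingEnd ℂ) z2) d2 d0 (-(a1+a3)) 0 (-θ') (hd 2) (hd 0)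
            (by rw [Complex.norm_conj, mul_comm]; exact hle2)
            (by rw [exp_arg_conj, show (-(a1+a3) + -θ' - 0 : ℝ) = -a2 by rw [hθ']; ring]),
          hc0, hc2]
        rw [show ‖(starRingEnd ℂ) z2‖ / Real.sqrt (d2 * d0) = t2' by
          rw [Complex.norm_conj, mul_comm d2 d0, ht2']]
        rw [show -(((β:ℝ) * θ' : ℝ):ℂ) * Complex.I = (((β:ℝ) * -θ' : ℝ):ℂ) * Complex.I by
          push_cast; ring]
      · -- (2,1)
        rw [show A 2 1 = (starRingEnd ℂ) z3 from (hH.apply 2 1).symm,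
          entry_helper α β ((starRingEnd ℂ) z3) d2 d1 (-(a1+a3)) (-a1) 0 (hd 2) (hd 1)
            (by rw [Complex.norm_conj, mul_comm]; exact hle1)
            (by rw [exp_arg_conj, show (-(a1+a3) + 0 - (-a1) : ℝ) = -a3 by ring]),
          hc1, hc2]
        rw [show ‖(starRingEnd ℂ) z3‖ / Real.sqrt (d2 * d1) = t1' by
          rw [Complex.norm_conj, mul_comm d2 d1, ht1']]
        norm_num
      · -- (2,2)
        rw [diag_eq hA 2, ← hd2, diag_entry α β d2 ((β:ℝ) * (-(a1+a3))) (hd 2), hc2]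
    rw [hmap]
    exact hT.mul_mul_conjTranspose_same _
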